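/- If μ is a Borel probability measure on [0,1] that is singular with respect to Lebesgue measure, then for every ε > 0 there exists δ > 0 such that every Borel probability measure ν on [0,1] with ‖μ − ν‖_FM < δ belongs to M_1^ε. -/

import Mathlib

open MeasureTheory Set Filter Topology

noncomputable section

/-- The Markov operator of an iterated function system `(g, p)` on `[0,1]`. -/
def markovOp {k : ℕ} (g : Fin k → ℝ → ℝ) (p : Fin k → ℝ) (μ : Measure ℝ) : Measure ℝ :=
  ∑ i : Fin k, ENNReal.ofReal (p i) • Measure.map (g i) μ

/-- `p` is a probability vector. -/
def ProbVec {k : ℕ} (p : Fin k → ℝ) : Prop :=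
  (∀ i, 0 ≤ p i) ∧ ∑ i : Fin k, p i = 1

/-- Membership in `M₁(0,1)`: Borel probability measures on `[0,1]` giving full mass
to the open interval `(0,1)`. -/
def MemM1 (μ : Measure ℝ) : Prop :=
  IsProbabilityMeasure μ ∧ μ (Ioo (0 : ℝ) 1) = 1

/-- The set `N_{M,α}`. -/
def Nset (M α : ℝ) : Set (Measure ℝ) :=
  {μ | MemM1 μ ∧ ∀ x ∈ Icc (0 : ℝ) 1,
    μ (Icc (0 : ℝ) x) ≤ ENNReal.ofReal (M * x ^ α) ∧
    μ (Icc (1 - x) 1) ≤ ENNReal.ofReal (M * x ^ α)}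

/-- The class `C⁺_β`: continuous nondecreasing maps of `[0,1]` fixing `0` and `1`,
continuously differentiable on `[0,β]` and `[1-β,1]`. -/
structure CPlus (β : ℝ) (g : ℝ → ℝ) : Prop where
  mapsTo : MapsTo g (Icc (0 : ℝ) 1) (Icc (0 : ℝ) 1)
  contOn : ContinuousOn g (Icc (0 : ℝ) 1)
  mono : MonotoneOn g (Icc (0 : ℝ) 1)
  map_zero : g 0 = 0
  map_one : g 1 = 1
  c1_left : ContDiffOn ℝ 1 g (Icc (0 : ℝ) β)
  c1_right : ContDiffOn ℝ 1 g (Icc (1 - β) 1)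

/-- `g` is a homeomorphism of `[0,1]` (a continuous bijection of the compact
interval; continuity of the inverse is automatic). -/
def IsIccHomeo (g : ℝ → ℝ) : Prop :=
  MapsTo g (Icc (0 : ℝ) 1) (Icc (0 : ℝ) 1) ∧ InjOn g (Icc (0 : ℝ) 1) ∧
    SurjOn g (Icc (0 : ℝ) 1) (Icc (0 : ℝ) 1)

/-- Admissible iterated function system generated by homeomorphisms in `C⁺_β`:
strictly positive probabilities, maps moving every interior point both down and up,
and positive Lyapunov exponents at the common fixed points `0` and `1`
(the one-sided derivatives there being positive). -/
structure Admissible (β : ℝ) {k : ℕ} (g : Fin k → ℝ → ℝ) (p : Fin k → ℝ) : Prop where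
  cplus : ∀ i, CPlus β (g i)
  homeo : ∀ i, IsIccHomeo (g i)
  p_pos : ∀ i, 0 < p i
  p_sum : ∑ i : Fin k, p i = 1
  below : ∀ x ∈ Ioo (0 : ℝ) 1, ∃ i, g i x < x
  above : ∀ x ∈ Ioo (0 : ℝ) 1, ∃ j, x < g j x
  deriv0_pos : ∀ i, 0 < derivWithin (g i) (Icc (0 : ℝ) 1) 0
  deriv1_pos : ∀ i, 0 < derivWithin (g i) (Icc (0 : ℝ) 1) 1
  lyap0 : 0 < ∑ i : Fin k, p i * Real.log (derivWithin (g i) (Icc (0 : ℝ) 1) 0)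
  lyap1 : 0 < ∑ i : Fin k, p i * Real.log (derivWithin (g i) (Icc (0 : ℝ) 1) 1)

/-- Composition of the maps of an IFS along a finite word:
`wordComp g [i_n, …, i_1] = g i_n ∘ ⋯ ∘ g i_1`. -/
def wordComp {k : ℕ} (g : Fin k → ℝ → ℝ) : List (Fin k) → ℝ → ℝ
  | [], x => x
  | i :: w, x => g i (wordComp g w x)

/-- Composition of the first `n` maps along an infinite word `ω`:
`iterComp g ω n = g (ω (n-1)) ∘ ⋯ ∘ g (ω 0)`. -/
def iterComp {k : ℕ} (g : Fin k → ℝ → ℝ) (ω : ℕ → Fin k) : ℕ → ℝ → ℝ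
  | 0 => id
  | n + 1 => g (ω n) ∘ iterComp g ω n

/-- Supremum of `|f|` over a set `K`. -/
def supOn (K : Set ℝ) (f : ℝ → ℝ) : ℝ :=
  sSup ((fun x => |f x|) '' K)

/-- The Fortet–Mourier distance: the Fortet–Mourier norm of `μ - ν`. -/
def FMdist (μ ν : Measure ℝ) : ℝ :=
  sSup {r | ∃ f : ℝ → ℝ, (∀ x, |f x| ≤ 1) ∧ LipschitzWith 1 f ∧
    r = (∫ x, f x ∂μ) - ∫ x, f x ∂ν}

/-- The distance `d₀` between two iterated function systems. -/
def dzero {k : ℕ} (S T : Fin k → ℝ → ℝ) (p q : Fin k → ℝ) : ℝ :=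
  ∑ i : Fin k, (|p i - q i| + supOn (Icc (0 : ℝ) 1) (fun x => S i x - T i x))

/-- `g` is absolutely continuous on `[0,1]`. -/
def AbsCont (g : ℝ → ℝ) : Prop :=
  ∀ ε > 0, ∃ δ > 0, ∀ n : ℕ, ∀ a b : Fin n → ℝ,
    (∀ i, 0 ≤ a i ∧ a i ≤ b i ∧ b i ≤ 1) →
    (Pairwise fun i j => Disjoint (Ioo (a i) (b i)) (Ioo (a j) (b j))) →
    ∑ i, (b i - a i) < δ → ∑ i, |g (b i) - g (a i)| < ε

/-- Membership in `M₁^ε`: some Borel subset of `[0,1]` of Lebesgue measure `< ε`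
carries `μ`-mass `> 1 - ε/2`. -/
def MemM1eps (ε : ℝ) (μ : Measure ℝ) : Prop :=
  ∃ A : Set ℝ, MeasurableSet A ∧ A ⊆ Icc (0 : ℝ) 1 ∧
    volume A < ENNReal.ofReal ε ∧ ENNReal.ofReal (1 - ε / 2) < μ A

/-- Clamping of a real number to `[0,1]`. -/
def clampI (x : ℝ) : ℝ := max 0 (min 1 x)

/-- A point of the space `F₀`: a `k`-tuple of homeomorphisms of `[0,1]` in `C⁺_β`
(together with their inverses) and a probability vector.  The maps are normalized
outside `[0,1]` by clamping, so that they are determined by their restrictions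
to `[0,1]`. -/
structure Sys (β : ℝ) (k : ℕ) where
  g : Fin k → ℝ → ℝ
  ginv : Fin k → ℝ → ℝ
  p : Fin k → ℝ
  prob : ProbVec p
  cplus : ∀ i, CPlus β (g i)
  ginv_mapsTo : ∀ i, MapsTo (ginv i) (Icc (0 : ℝ) 1) (Icc (0 : ℝ) 1)
  left_inv : ∀ i, ∀ x ∈ Icc (0 : ℝ) 1, ginv i (g i x) = x
  right_inv : ∀ i, ∀ y ∈ Icc (0 : ℝ) 1, g i (ginv i y) = y
  g_clamp : ∀ i x, g i x = g i (clampI x)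
  ginv_clamp : ∀ i x, ginv i x = ginv i (clampI x)

/-- The metric `d` on the space of systems. -/
def dSys {β : ℝ} {k : ℕ} (A B : Sys β k) : ℝ :=
  ∑ i : Fin k,
    (|A.p i - B.p i|
      + supOn (Icc (0 : ℝ) 1) (fun x => A.g i x - B.g i x)
      + supOn (Icc (0 : ℝ) 1) (fun x => A.ginv i x - B.ginv i x)
      + max
          (supOn (Icc (0 : ℝ) β)
            (fun x => derivWithin (A.g i) (Icc (0 : ℝ) β) x -
              derivWithin (B.g i) (Icc (0 : ℝ) β) x))
          (supOn (Icc (1 - β) 1)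
            (fun x => derivWithin (A.g i) (Icc (1 - β) 1) x -
              derivWithin (B.g i) (Icc (1 - β) 1) x)))

/-- The set `F`: admissible systems all of whose maps are absolutely continuous. -/
def Fset (β : ℝ) (k : ℕ) : Set (Sys β k) :=
  {A | Admissible β A.g A.p ∧ ∀ i, AbsCont (A.g i)}

/-- Closure of a set of systems with respect to the metric `dSys`. -/
def closureSys {β : ℝ} {k : ℕ} (S : Set (Sys β k)) : Set (Sys β k) :=
  {A | ∀ ε > 0, ∃ B ∈ S, dSys A B < ε}

/-- `S` is nowhere dense in the subspace `X` (with respect to `dSys`):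
every ball centered in `X` contains a point of `X` some ball around which
misses `S ∩ X`. -/
def NowhereDenseIn {β : ℝ} {k : ℕ} (X S : Set (Sys β k)) : Prop :=
  ∀ A ∈ X, ∀ ε > 0, ∃ B ∈ X, dSys A B < ε ∧ ∃ δ > 0, ∀ C ∈ X ∩ S, δ ≤ dSys B C

/-- Cesàro averages `(ν + Pν + ⋯ + P^{n-1}ν)/n` of a measure under the Markov
operator of an IFS. -/
def cesaro {k : ℕ} (g : Fin k → ℝ → ℝ) (p : Fin k → ℝ) (ν : Measure ℝ) (n : ℕ) :
    Measure ℝ :=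
  (n : ENNReal)⁻¹ • ∑ j ∈ Finset.range n, (fun m => markovOp g p m)^[j] ν


open Metric

-- integrability of test functions
lemma test_integrable (μ : Measure ℝ) [IsFiniteMeasure μ] {f : ℝ → ℝ}
    (hb : ∀ x, |f x| ≤ 1) (hl : LipschitzWith 1 f) : Integrable f μ :=
  (Integrable.mono' (integrable_const 1) hl.continuous.aestronglyMeasurable
    (Eventually.of_forall (fun x => by simpa using hb x)))

lemma FM_lower (μ ν : Measure ℝ) [IsProbabilityMeasure μ] [IsProbabilityMeasure ν]
    {f : ℝ → ℝ} (hb : ∀ x, |f x| ≤ 1) (hl : LipschitzWith 1 f) :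
    (∫ x, f x ∂μ) - ∫ x, f x ∂ν ≤ FMdist μ ν := by
  apply le_csSup
  · refine ⟨2, ?_⟩
    rintro r ⟨g, hgb, hgl, rfl⟩
    have h1 : |∫ x, g x ∂μ| ≤ 1 := by
      calc |∫ x, g x ∂μ| ≤ ∫ x, ‖g x‖ ∂μ := (Real.norm_eq_abs _) ▸ norm_integral_le_integral_norm _
        _ ≤ ∫ _x, (1:ℝ) ∂μ := integral_mono (test_integrable μ hgb hgl).norm
            (integrable_const 1) (fun x => by simpa using hgb x)
        _ = 1 := by simp
    have h2 : |∫ x, g x ∂ν| ≤ 1 := by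
      calc |∫ x, g x ∂ν| ≤ ∫ x, ‖g x‖ ∂ν := (Real.norm_eq_abs _) ▸ norm_integral_le_integral_norm _
        _ ≤ ∫ _x, (1:ℝ) ∂ν := integral_mono (test_integrable ν hgb hgl).norm
            (integrable_const 1) (fun x => by simpa using hgb x)
        _ = 1 := by simp
    have := abs_sub_abs_le_abs_sub (∫ x, g x ∂μ) (∫ x, g x ∂ν)
    nlinarith [abs_le.mp h1, abs_le.mp h2, neg_abs_le (∫ x, g x ∂ν), le_abs_self (∫ x, g x ∂μ)]
  · exact ⟨f, hb, hl, rfl⟩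

/-- If a Borel probability measure `μ` on `[0,1]` is singular with
respect to Lebesgue measure, then every probability measure on `[0,1]`
sufficiently close to `μ` in the Fortet–Mourier norm lies in `M₁^ε`. -/
theorem singular_measure_FM_neighborhood (μ : Measure ℝ)
    (hμ : IsProbabilityMeasure μ) (hsupp : μ (Icc (0 : ℝ) 1)ᶜ = 0)
    (hsing : μ ⟂ₘ (volume : Measure ℝ)) :
    ∀ ε > (0 : ℝ), ∃ δ > (0 : ℝ), ∀ ν : Measure ℝ, IsProbabilityMeasure ν →
      ν (Icc (0 : ℝ) 1)ᶜ = 0 → FMdist μ ν < δ → MemM1eps ε ν := by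
  intro ε hε
  -- reduce to ε ≤ 1
  set ε' : ℝ := min ε 1 with hε'def
  have hε'pos : 0 < ε' := lt_min hε one_pos
  have hε'le : ε' ≤ 1 := min_le_right _ _
  have hε'leε : ε' ≤ ε := min_le_left _ _
  -- singular decomposition
  obtain ⟨s, hsm, hμs, hvs⟩ := hsing
  -- the set S carrying μ, of Lebesgue measure zero
  set S : Set ℝ := sᶜ ∩ Icc (0:ℝ) 1 with hSdef
  have hSm : MeasurableSet S := hsm.compl.inter measurableSet_Icc
  have hvS : volume S = 0 := le_antisymm (le_trans (measure_mono inter_subset_left) hvs.le) (zero_le)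
  have hμS : μ S = 1 := by
    have h1 : μ Sᶜ = 0 := by
      have : Sᶜ = s ∪ (Icc (0:ℝ) 1)ᶜ := by
        rw [hSdef, compl_inter, compl_compl]
      rw [this]
      exact le_antisymm (le_trans (measure_union_le _ _) (by rw [hμs, hsupp]; simp)) (zero_le)
    have := measure_add_measure_compl (μ := μ) hSm
    rw [h1, add_zero] at this
    rw [this, measure_univ]
  -- inner regular: compact K ⊆ S with μ K close to 1
  obtain ⟨K, hKS, hKc, hKμ⟩ := hSm.exists_isCompact_lt_add (μ := μ)
    (by rw [hμS]; exact ENNReal.one_ne_top) (ε := ENNReal.ofReal (ε'/8))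
    (by simp [ENNReal.ofReal_pos]; positivity)
  rw [hμS] at hKμ
  have hμK_fin : μ K ≠ ⊤ := (measure_lt_top μ K).ne
  have h8 : (0:ℝ) < ε'/8 := by positivity
  have hμK : 1 - ε'/8 < (μ K).toReal := by
    have h := (ENNReal.toReal_lt_toReal ENNReal.one_ne_top
      (ENNReal.add_ne_top.mpr ⟨hμK_fin, ENNReal.ofReal_ne_top⟩)).mpr hKμ
    rw [ENNReal.toReal_one, ENNReal.toReal_add hμK_fin ENNReal.ofReal_ne_top,
      ENNReal.toReal_ofReal h8.le] at h
    linarith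
  -- K is nonempty
  have hKne : K.Nonempty := by
    rcases K.eq_empty_or_nonempty with h | h
    · exfalso; rw [h] at hμK; simp at hμK; linarith
    · exact h
  -- choose r with small volume thickening
  have hvK : volume K = 0 := le_antisymm (le_trans (measure_mono hKS) hvS.le) (zero_le)
  have htend := tendsto_measure_cthickening_of_isCompact (μ := volume) hKc
  rw [hvK] at htend
  have hev : ∀ᶠ r in 𝓝 (0:ℝ), volume (cthickening r K) < ENNReal.ofReal ε' :=
    htend.eventually_lt_const (by simp [ENNReal.ofReal_pos, hε'pos])
  obtain ⟨t, ht_pos, ht⟩ := Metric.eventually_nhds_iff.mp hev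
  set r : ℝ := min (t/2) 1 with hrdef
  have hr_pos : 0 < r := lt_min (by linarith) one_pos
  have hr_le1 : r ≤ 1 := min_le_right _ _
  have hrt : dist r 0 < t := by
    rw [Real.dist_eq, sub_zero, abs_of_pos hr_pos]
    calc r ≤ t/2 := min_le_left _ _
      _ < t := by linarith
  have hvT : volume (cthickening r K) < ENNReal.ofReal ε' := ht hrt
  -- the test function
  set g : ℝ → ℝ := fun x => max 0 (r - infDist x K) with hgdef
  have hg_lip : LipschitzWith 1 g := by
    have h1 : LipschitzWith 1 (fun x : ℝ => r - infDist x K) := by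
      apply LipschitzWith.of_le_add
      intro x y
      have := infDist_le_infDist_add_dist (x := y) (y := x) (s := K)
      rw [dist_comm y x] at this
      linarith
    exact h1.const_max 0
  have hg_nonneg : ∀ x, 0 ≤ g x := fun x => le_max_left _ _
  have hg_le_r : ∀ x, g x ≤ r := fun x =>
    max_le hr_pos.le (by have := infDist_nonneg (x := x) (s := K); linarith)
  have hg_bd : ∀ x, |g x| ≤ 1 := fun x => by
    rw [abs_of_nonneg (hg_nonneg x)]; exact (hg_le_r x).trans hr_le1
  -- g = r on K
  have hg_onK : ∀ x ∈ K, g x = r := fun x hx => by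
    simp [hgdef, infDist_zero_of_mem hx, hr_pos.le]
  -- g = 0 off cthickening r K
  have hg_off : ∀ x, x ∉ cthickening r K → g x = 0 := by
    intro x hx
    rw [Metric.mem_cthickening_iff, not_le] at hx
    have hfin : EMetric.infEdist x K ≠ ⊤ := Metric.infEdist_ne_top hKne
    have : r < infDist x K := by
      have h2 := (ENNReal.toReal_lt_toReal ENNReal.ofReal_ne_top hfin).mpr hx
      rw [ENNReal.toReal_ofReal hr_pos.le] at h2
      exact h2
    simp only [hgdef]
    rw [max_eq_left (by linarith)]
  -- the thickening and its properties
  set T : Set ℝ := cthickening r K with hTdef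
  have hTc : IsCompact T := hKc.cthickening
  have hTm : MeasurableSet T := isClosed_cthickening.measurableSet
  have hg_supp : HasCompactSupport g := HasCompactSupport.intro hTc hg_off
  have hg_int : ∀ (m : Measure ℝ), IsFiniteMeasure m → Integrable g m := fun m hm => by
    haveI := hm
    exact hg_lip.continuous.integrable_of_hasCompactSupport hg_supp
  -- lower bound for ∫ g dμ
  have hint_mu : r * (μ K).toReal ≤ ∫ x, g x ∂μ := by
    have hle : K.indicator (fun _ => r) ≤ g := by
      intro x
      by_cases hx : x ∈ K
      · simp [Set.indicator_of_mem hx, hg_onK x hx]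
      · simp [Set.indicator_of_notMem hx, hg_nonneg x]
    calc r * (μ K).toReal = ∫ x, K.indicator (fun _ => r) x ∂μ := by
          rw [integral_indicator_const _ hKc.measurableSet, smul_eq_mul, measureReal_def]; ring
      _ ≤ ∫ x, g x ∂μ := integral_mono
          ((integrable_indicator_iff hKc.measurableSet).mpr
            (integrableOn_const (measure_lt_top μ K).ne))
          (hg_int μ inferInstance) hle
  -- now produce δ
  refine ⟨r * ε' / 8, by positivity, ?_⟩
  intro ν hν hνsupp hFM
  -- upper bound for ∫ g dν
  have hint_nu : (∫ x, g x ∂ν) ≤ r * (ν T).toReal := by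
    have hle : g ≤ T.indicator (fun _ => r) := by
      intro x
      by_cases hx : x ∈ T
      · simp [Set.indicator_of_mem hx, hg_le_r x]
      · simp [Set.indicator_of_notMem hx, hg_off x hx]
    calc (∫ x, g x ∂ν) ≤ ∫ x, T.indicator (fun _ => r) x ∂ν := integral_mono
          (hg_int ν inferInstance)
          ((integrable_indicator_iff hTm).mpr
            (integrableOn_const (measure_lt_top ν T).ne)) hle
      _ = r * (ν T).toReal := by rw [integral_indicator_const _ hTm, smul_eq_mul, measureReal_def]; ring
  -- FM estimate
  have hFMest := FM_lower μ ν hg_bd hg_lip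
  have hnuT : 1 - ε' / 4 < (ν T).toReal := by
    have h1 : r * (μ K).toReal - r * (ν T).toReal < r * ε' / 8 := by
      calc r * (μ K).toReal - r * (ν T).toReal
          ≤ (∫ x, g x ∂μ) - ∫ x, g x ∂ν := by linarith
        _ ≤ FMdist μ ν := hFMest
        _ < r * ε' / 8 := hFM
    have h2 : (μ K).toReal - (ν T).toReal < ε' / 8 := by
      have := (mul_lt_mul_iff_right₀ hr_pos).mp (by linarith : r * ((μ K).toReal - (ν T).toReal) < r * (ε'/8))
      linarith
    linarith
  -- the set A
  refine ⟨T ∩ Icc (0:ℝ) 1, hTm.inter measurableSet_Icc, inter_subset_right, ?_, ?_⟩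
  · calc volume (T ∩ Icc (0:ℝ) 1) ≤ volume T := measure_mono inter_subset_left
      _ < ENNReal.ofReal ε' := hvT
      _ ≤ ENNReal.ofReal ε := ENNReal.ofReal_le_ofReal hε'leε
  · have hνA : ν T ≤ ν (T ∩ Icc (0:ℝ) 1) := by
      calc ν T ≤ ν ((T ∩ Icc (0:ℝ) 1) ∪ (Icc (0:ℝ) 1)ᶜ) := measure_mono (by
            intro x hx
            by_cases h : x ∈ Icc (0:ℝ) 1
            · exact Or.inl ⟨hx, h⟩
            · exact Or.inr h)
        _ ≤ ν (T ∩ Icc (0:ℝ) 1) + ν (Icc (0:ℝ) 1)ᶜ := measure_union_le _ _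
        _ = ν (T ∩ Icc (0:ℝ) 1) := by rw [hνsupp, add_zero]
    have hAfin : ν (T ∩ Icc (0:ℝ) 1) ≠ ⊤ := (measure_lt_top ν _).ne
    have hA : 1 - ε' / 4 < (ν (T ∩ Icc (0:ℝ) 1)).toReal :=
      hnuT.trans_le (ENNReal.toReal_le_toReal (measure_lt_top ν T).ne hAfin |>.mpr hνA)
    calc ENNReal.ofReal (1 - ε / 2) ≤ ENNReal.ofReal (1 - ε' / 2) :=
          ENNReal.ofReal_le_ofReal (by linarith)
      _ < ν (T ∩ Icc (0:ℝ) 1) := by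
          rw [ENNReal.ofReal_lt_iff_lt_toReal (by linarith) hAfin]
          linarith


end
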